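/- Let R be a reduced commutative ring with identity which is not an integral domain. Then the annihilator-ideal graph A_I(R) equals the annihilating-ideal graph 𝔸𝔾(R) if and only if R has exactly two minimal prime ideals. -/

import Mathlib

/-- The vertex set of the annihilator-ideal/annihilating-ideal graphs:
nonzero ideals with nonzero annihilator. -/
abbrev AnnVert (R : Type*) [CommRing R] : Type _ :=
  {I : Ideal R // I ≠ ⊥ ∧ Submodule.annihilator I ≠ ⊥}

/-- The annihilator-ideal graph `A_I(R)`. -/
def annihilatorIdealGraph (R : Type*) [CommRing R] : SimpleGraph (AnnVert R) where
  Adj I J := I ≠ J ∧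
    ((Submodule.annihilator (I.1 * J.1) : Ideal R) : Set R) ≠
      ↑(Submodule.annihilator I.1) ∪ ↑(Submodule.annihilator J.1)
  symm := by
    refine ⟨?_⟩
    rintro I J ⟨hne, h⟩
    exact ⟨hne.symm, by rwa [mul_comm, Set.union_comm]⟩
  loopless := by refine ⟨?_⟩; rintro I ⟨h, -⟩; exact h rfl

/-- The annihilating-ideal graph `𝔸𝔾(R)`. -/
def annihilatingIdealGraph (R : Type*) [CommRing R] : SimpleGraph (AnnVert R) where
  Adj I J := I ≠ J ∧ I.1 * J.1 = ⊥
  symm := by refine ⟨?_⟩; rintro I J ⟨hne, h⟩; exact ⟨hne.symm, by rwa [mul_comm]⟩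
  loopless := by refine ⟨?_⟩; rintro I ⟨h, -⟩; exact h rfl

/-- `G` is a complete bipartite graph with parts `s` and `t`. -/
def SimpleGraph.IsCompleteBipartiteWith {V : Type*} (G : SimpleGraph V) (s t : Set V) : Prop :=
  Disjoint s t ∧ s ∪ t = Set.univ ∧
    ∀ u v, G.Adj u v ↔ (u ∈ s ∧ v ∈ t) ∨ (u ∈ t ∧ v ∈ s)

/-- `G` is a star graph: complete bipartite with one part a single vertex and the
other part nonempty. -/
def SimpleGraph.IsStarGraph {V : Type*} (G : SimpleGraph V) : Prop :=
  ∃ (c : V) (t : Set V), t.Nonempty ∧ G.IsCompleteBipartiteWith {c} t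

section Aux

open Ideal

variable {R : Type*} [CommRing R]

/-- In a reduced ring, elements of a minimal prime are annihilated by something
outside the prime. -/
lemma aux_exists_mul_eq_zero [IsReduced R] {P : Ideal R}
    (hP : P ∈ minimalPrimes R) {x : R} (hx : x ∈ P) : ∃ s ∉ P, s * x = 0 := by
  haveI hPp : P.IsPrime := hP.1.1
  have hnil : IsNilpotent (algebraMap R (Localization P.primeCompl) x) := by
    have h := IsLocalization.AtPrime.radical_map_of_mem_minimalPrimes
      (A := Localization.AtPrime P) P ⊥ hP
    have hm : algebraMap R (Localization.AtPrime P) x ∈ P.map (algebraMap R _) :=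
      Ideal.mem_map_of_mem _ hx
    rw [← h, Ideal.map_bot] at hm
    obtain ⟨n, hn⟩ := hm
    exact ⟨n, (Submodule.mem_bot _).mp hn⟩
  obtain ⟨n, hn⟩ := hnil
  rw [← map_pow, IsLocalization.map_eq_zero_iff P.primeCompl] at hn
  obtain ⟨⟨s, hs⟩, hsx⟩ := hn
  simp only at hsx
  cases n with
  | zero =>
      exfalso
      rw [pow_zero, mul_one] at hsx
      exact hs (hsx ▸ P.zero_mem)
  | succ m =>
      refine ⟨s, hs, IsNilpotent.eq_zero ⟨m + 1, ?_⟩⟩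
      calc (s * x) ^ (m + 1) = s ^ m * (s * x ^ (m + 1)) := by ring
        _ = 0 := by rw [hsx, mul_zero]

lemma aux_mem_ann_span {b t : R} (h : t * b = 0) :
    t ∈ Submodule.annihilator (Ideal.span {b} : Ideal R) := by
  rw [Submodule.mem_annihilator]
  intro y hy
  obtain ⟨r, rfl⟩ := Ideal.mem_span_singleton'.mp hy
  show t * (r * b) = 0
  calc t * (r * b) = r * (t * b) := by ring
    _ = 0 := by rw [h, mul_zero]

lemma aux_ann_le_prime {K P : Ideal R} (hP : P.IsPrime)
    (h : ¬ K ≤ P) : Submodule.annihilator K ≤ P := by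
  obtain ⟨k, hk, hkP⟩ := SetLike.not_le_iff_exists.mp h
  intro x hxa
  have hxk : x * k = 0 := Submodule.mem_annihilator.mp hxa k hk
  exact (hP.mem_or_mem (show x * k ∈ P by rw [hxk]; exact P.zero_mem)).resolve_right hkP

lemma aux_ann_eq {A B : Ideal R} (hB : B.IsPrime) (hinf : A ⊓ B = ⊥)
    {K : Ideal R} (h1 : K ≤ A) (h2 : ¬ K ≤ B) : Submodule.annihilator K = B := by
  refine le_antisymm (aux_ann_le_prime hB h2) ?_
  intro q hq
  rw [Submodule.mem_annihilator]
  intro y hy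
  show q * y = 0
  have : q * y ∈ A ⊓ B := ⟨A.mul_mem_left q (h1 hy), B.mul_mem_right y hq⟩
  rw [hinf] at this
  exact (Submodule.mem_bot R).mp this

lemma aux_sInf_min [IsReduced R] [Nontrivial R] : sInf (minimalPrimes R) = ⊥ := by
  have h := nilradical_eq_zero R
  rw [nilradical, Ideal.zero_eq_bot] at h
  rw [minimalPrimes, Ideal.sInf_minimalPrimes, h]

lemma aux_bot_not_prime (hdom : ¬IsDomain R) [Nontrivial R] :
    ¬ (⊥ : Ideal R).IsPrime := by
  intro h
  haveI : NoZeroDivisors R :=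
    ⟨fun {a b} hab => by
      simpa using h.mem_or_mem (show a * b ∈ (⊥ : Ideal R) by simp [hab])⟩
  exact hdom (NoZeroDivisors.to_isDomain R)

end Aux

theorem stmt8 (R : Type*) [CommRing R] [Nontrivial R] [IsReduced R] (hdom : ¬IsDomain R) :
    annihilatorIdealGraph R = annihilatingIdealGraph R ↔
      ∃ P Q : Ideal R, P ≠ Q ∧ minimalPrimes R = {P, Q} := by
  constructor
  · -- forward direction
    intro heq
    by_contra hcon
    push_neg at hcon
    have hsinf : sInf (minimalPrimes R) = ⊥ := aux_sInf_min
    have hbotnp : ¬ (⊥ : Ideal R).IsPrime := aux_bot_not_prime hdom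
    -- a first minimal prime
    obtain ⟨M, hM⟩ := Ideal.exists_maximal R
    haveI := hM.isPrime
    obtain ⟨P1, hP1, -⟩ := Ideal.exists_minimalPrimes_le (I := (⊥ : Ideal R)) (J := M) bot_le
    -- a second one
    obtain ⟨P2, hP2, hP21⟩ : ∃ P2 ∈ minimalPrimes R, P2 ≠ P1 := by
      by_contra hc
      push_neg at hc
      have hsingle : minimalPrimes R = {P1} :=
        Set.eq_singleton_iff_unique_mem.mpr ⟨hP1, hc⟩
      rw [hsingle, sInf_singleton] at hsinf
      exact hbotnp (hsinf ▸ hP1.1.1)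
    -- a third one
    obtain ⟨P3, hP3, hP31, hP32⟩ : ∃ P3 ∈ minimalPrimes R, P3 ≠ P1 ∧ P3 ≠ P2 := by
      have hsub : ({P1, P2} : Set (Ideal R)) ⊆ minimalPrimes R := by
        rintro x (rfl | rfl)
        exacts [hP1, hP2]
      by_contra hc
      push_neg at hc
      refine hcon P1 P2 hP21.symm (Set.Subset.antisymm ?_ hsub)
      intro x hx
      by_cases h1 : x = P1
      · exact Or.inl h1
      · exact Or.inr (hc x hx h1)
    haveI hP1p : P1.IsPrime := hP1.1.1
    haveI hP2p : P2.IsPrime := hP2.1.1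
    haveI hP3p : P3.IsPrime := hP3.1.1
    have hnle : ∀ {A B : Ideal R}, A ∈ minimalPrimes R → B ∈ minimalPrimes R →
        A ≠ B → ¬ A ≤ B := by
      intro A B hA hB hAB hle
      exact hAB (le_antisymm hle (hB.2 ⟨hA.1.1, bot_le⟩ hle))
    -- choose b ∈ P2 \ (P1 ∪ P3) and c ∈ P3 \ (P1 ∪ P2)
    have hb' : ¬ ((P2 : Set R) ⊆ ↑P1 ∪ ↑P3) := by
      rw [Ideal.subset_union]
      rintro (h | h)
      · exact hnle hP2 hP1 hP21 h
      · exact hnle hP2 hP3 (Ne.symm hP32) h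
    obtain ⟨b, hb2, hb13⟩ := Set.not_subset.mp hb'
    have hc' : ¬ ((P3 : Set R) ⊆ ↑P1 ∪ ↑P2) := by
      rw [Ideal.subset_union]
      rintro (h | h)
      · exact hnle hP3 hP1 hP31 h
      · exact hnle hP3 hP2 hP32 h
    obtain ⟨c, hc3, hc12⟩ := Set.not_subset.mp hc'
    have hb1 : b ∉ P1 := fun h => hb13 (Or.inl h)
    have hb3 : b ∉ P3 := fun h => hb13 (Or.inr h)
    have hc1 : c ∉ P1 := fun h => hc12 (Or.inl h)
    have hc2 : c ∉ P2 := fun h => hc12 (Or.inr h)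
    obtain ⟨t, ht2, htb⟩ := aux_exists_mul_eq_zero hP2 hb2
    obtain ⟨s, hs3, hsc⟩ := aux_exists_mul_eq_zero hP3 hc3
    have hbne : b ≠ 0 := fun h => hb1 (h ▸ P1.zero_mem)
    have hcne : c ≠ 0 := fun h => hc1 (h ▸ P1.zero_mem)
    have htne : t ≠ 0 := fun h => ht2 (h ▸ P2.zero_mem)
    have hsne : s ≠ 0 := fun h => hs3 (h ▸ P3.zero_mem)
    have hbc : b * c ≠ 0 := fun h =>
      (hP1p.mem_or_mem (show b * c ∈ P1 by rw [h]; exact P1.zero_mem)).elim hb1 hc1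
    -- build the two vertices
    have htc : t * c ≠ 0 := fun h =>
      ht2 ((hP2p.mem_or_mem (show t * c ∈ P2 by rw [h]; exact P2.zero_mem)).resolve_right hc2)
    have hsb : s * b ≠ 0 := fun h =>
      hs3 ((hP3p.mem_or_mem (show s * b ∈ P3 by rw [h]; exact P3.zero_mem)).resolve_right hb3)
    refine absurd ?_ hbc
    -- vertices I = span{b}, J = span{c}
    let I : AnnVert R := ⟨Ideal.span {b},
      fun h => hbne (Ideal.span_singleton_eq_bot.mp h),
      fun h => htne ((Submodule.mem_bot R).mp (h ▸ aux_mem_ann_span htb))⟩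
    let J : AnnVert R := ⟨Ideal.span {c},
      fun h => hcne (Ideal.span_singleton_eq_bot.mp h),
      fun h => hsne ((Submodule.mem_bot R).mp (h ▸ aux_mem_ann_span hsc))⟩
    have hIJ : I ≠ J := by
      intro h
      have hspan : Ideal.span ({b} : Set R) = Ideal.span {c} := congrArg Subtype.val h
      have : t ∈ Submodule.annihilator (Ideal.span ({c} : Set R)) :=
        hspan ▸ aux_mem_ann_span htb
      exact htc (Submodule.mem_annihilator.mp this c (Ideal.mem_span_singleton_self c))
    have hprod : I.1 * J.1 = Ideal.span {b * c} :=
      Ideal.span_singleton_mul_span_singleton b c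
    have hAdj : (annihilatorIdealGraph R).Adj I J := by
      refine ⟨hIJ, ?_⟩
      intro hset
      have hsmem : s ∈ Submodule.annihilator (I.1 * J.1) := by
        rw [hprod]
        exact aux_mem_ann_span (show s * (b * c) = 0 by
          calc s * (b * c) = b * (s * c) := by ring
            _ = 0 := by rw [hsc, mul_zero])
      have htmem : t ∈ Submodule.annihilator (I.1 * J.1) := by
        rw [hprod]
        exact aux_mem_ann_span (show t * (b * c) = 0 by
          calc t * (b * c) = c * (t * b) := by ring
            _ = 0 := by rw [htb, mul_zero])
      have hsum : s + t ∈ (↑(Submodule.annihilator (I.1 * J.1)) : Set R) :=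
        add_mem hsmem htmem
      rw [hset] at hsum
      have hannI3 : Submodule.annihilator I.1 ≤ P3 :=
        aux_ann_le_prime hP3p (fun h => hb3 (h (Ideal.mem_span_singleton_self b)))
      have hannJ2 : Submodule.annihilator J.1 ≤ P2 :=
        aux_ann_le_prime hP2p (fun h => hc2 (h (Ideal.mem_span_singleton_self c)))
      have hsI : s ∉ Submodule.annihilator I.1 := fun h => hs3 (hannI3 h)
      have htJ : t ∉ Submodule.annihilator J.1 := fun h => ht2 (hannJ2 h)
      rcases hsum with h | h
      · have : s ∈ Submodule.annihilator I.1 := by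
          have := Submodule.sub_mem _ (show s + t ∈ Submodule.annihilator I.1 from h)
            (aux_mem_ann_span htb : t ∈ Submodule.annihilator I.1)
          simpa using this
        exact hsI this
      · have : t ∈ Submodule.annihilator J.1 := by
          have := Submodule.sub_mem _ (show s + t ∈ Submodule.annihilator J.1 from h)
            (aux_mem_ann_span hsc : s ∈ Submodule.annihilator J.1)
          simpa using this
        exact htJ this
    rw [heq] at hAdj
    have hmem : b * c ∈ I.1 * J.1 :=
      Ideal.mul_mem_mul (Ideal.mem_span_singleton_self b) (Ideal.mem_span_singleton_self c)
    rw [hAdj.2] at hmem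
    exact (Submodule.mem_bot R).mp hmem
  · -- backward direction
    rintro ⟨P, Q, hPQ, hmin⟩
    have hPmem : P ∈ minimalPrimes R := hmin ▸ Or.inl rfl
    have hQmem : Q ∈ minimalPrimes R := hmin ▸ Or.inr rfl
    haveI hPp : P.IsPrime := hPmem.1.1
    haveI hQp : Q.IsPrime := hQmem.1.1
    have hinf : P ⊓ Q = ⊥ := by
      have h := aux_sInf_min (R := R)
      rw [hmin, sInf_pair] at h
      exact h
    have hinf' : Q ⊓ P = ⊥ := by rw [inf_comm]; exact hinf
    have part : ∀ K : Ideal R, K ≠ ⊥ → Submodule.annihilator K ≠ ⊥ →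
        (K ≤ P ∧ ¬ K ≤ Q) ∨ (K ≤ Q ∧ ¬ K ≤ P) := by
      intro K hK hAnn
      have hnot : ¬ (K ≤ P ∧ K ≤ Q) := fun ⟨h1, h2⟩ =>
        hK (le_bot_iff.mp (hinf ▸ le_inf h1 h2))
      by_cases h1 : K ≤ P
      · exact Or.inl ⟨h1, fun h2 => hnot ⟨h1, h2⟩⟩
      by_cases h2 : K ≤ Q
      · exact Or.inr ⟨h2, h1⟩
      · exact absurd (le_bot_iff.mp (hinf ▸
          le_inf (aux_ann_le_prime hPp h1) (aux_ann_le_prime hQp h2))) hAnn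
    apply SimpleGraph.ext
    funext I J
    show (I ≠ J ∧
        ((Submodule.annihilator (I.1 * J.1) : Ideal R) : Set R) ≠
          ↑(Submodule.annihilator I.1) ∪ ↑(Submodule.annihilator J.1)) =
      (I ≠ J ∧ I.1 * J.1 = ⊥)
    apply propext
    obtain ⟨hI0, hIann⟩ := I.2
    obtain ⟨hJ0, hJann⟩ := J.2
    have coreP : ∀ (hIP : I.1 ≤ P) (hIQ : ¬ I.1 ≤ Q) (hJP : J.1 ≤ P) (hJQ : ¬ J.1 ≤ Q),
        (((Submodule.annihilator (I.1 * J.1) : Ideal R) : Set R) ≠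
          ↑(Submodule.annihilator I.1) ∪ ↑(Submodule.annihilator J.1)) ↔ (I.1 * J.1 = ⊥) := by
      intro hIP hIQ hJP hJQ
      have hprodP : I.1 * J.1 ≤ P := le_trans Ideal.mul_le_inf (le_trans inf_le_left hIP)
      have hprodQ : ¬ I.1 * J.1 ≤ Q := fun h => (hQp.mul_le.mp h).elim hIQ hJQ
      have hprodne : I.1 * J.1 ≠ ⊥ := fun h => hprodQ (h.le.trans bot_le)
      constructor
      · intro h
        exfalso
        apply h
        rw [aux_ann_eq hQp hinf hprodP hprodQ, aux_ann_eq hQp hinf hIP hIQ,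
          aux_ann_eq hQp hinf hJP hJQ, Set.union_self]
      · intro h
        exact absurd h hprodne
    have coreQ : ∀ (hIQ : I.1 ≤ Q) (hIP : ¬ I.1 ≤ P) (hJQ : J.1 ≤ Q) (hJP : ¬ J.1 ≤ P),
        (((Submodule.annihilator (I.1 * J.1) : Ideal R) : Set R) ≠
          ↑(Submodule.annihilator I.1) ∪ ↑(Submodule.annihilator J.1)) ↔ (I.1 * J.1 = ⊥) := by
      intro hIQ hIP hJQ hJP
      have hprodQ : I.1 * J.1 ≤ Q := le_trans Ideal.mul_le_inf (le_trans inf_le_left hIQ)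
      have hprodP : ¬ I.1 * J.1 ≤ P := fun h => (hPp.mul_le.mp h).elim hIP hJP
      have hprodne : I.1 * J.1 ≠ ⊥ := fun h => hprodP (h.le.trans bot_le)
      constructor
      · intro h
        exfalso
        apply h
        rw [aux_ann_eq hPp hinf' hprodQ hprodP, aux_ann_eq hPp hinf' hIQ hIP,
          aux_ann_eq hPp hinf' hJQ hJP, Set.union_self]
      · intro h
        exact absurd h hprodne
    have coreMix : ∀ (K L : Ideal R), K ≤ P → ¬ K ≤ Q → L ≤ Q → ¬ L ≤ P →
        (((Submodule.annihilator (K * L) : Ideal R) : Set R) ≠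
          ↑(Submodule.annihilator K) ∪ ↑(Submodule.annihilator L)) ∧ (K * L = ⊥) := by
      intro K L hIP hIQ hJQ hJP
      have hle : K * L ≤ P ⊓ Q :=
        le_inf (le_trans Ideal.mul_le_inf (le_trans inf_le_left hIP))
          (le_trans Ideal.mul_le_inf (le_trans inf_le_right hJQ))
      rw [hinf] at hle
      have hbot : K * L = ⊥ := le_bot_iff.mp hle
      refine ⟨?_, hbot⟩
      rw [hbot, Submodule.annihilator_bot, aux_ann_eq hQp hinf hIP hIQ,
        aux_ann_eq hPp hinf' hJQ hJP]
      intro hset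
      have h1 : (1 : R) ∈ ((⊤ : Ideal R) : Set R) := Submodule.mem_top
      rw [hset] at h1
      rcases h1 with h | h
      · exact hQp.ne_top (Ideal.eq_top_of_isUnit_mem Q h isUnit_one)
      · exact hPp.ne_top (Ideal.eq_top_of_isUnit_mem P h isUnit_one)
    rcases part I.1 hI0 hIann with ⟨hIP, hIQ⟩ | ⟨hIQ, hIP⟩ <;>
      rcases part J.1 hJ0 hJann with ⟨hJP, hJQ⟩ | ⟨hJQ, hJP⟩
    · exact and_congr_right fun _ => coreP hIP hIQ hJP hJQ
    · have h := coreMix I.1 J.1 hIP hIQ hJQ hJP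
      exact and_congr_right fun _ => iff_of_true h.1 h.2
    · have h := coreMix J.1 I.1 hJP hJQ hIQ hIP
      refine and_congr_right fun _ => iff_of_true ?_ ?_
      · rw [mul_comm I.1 J.1, Set.union_comm]
        exact h.1
      · rw [mul_comm I.1 J.1]
        exact h.2
    · exact and_congr_right fun _ => coreQ hIQ hIP hJQ hJP
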